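/- Let V and W be real Banach spaces and let L be a nonempty symmetric closed subset of V. For every Φ ∈ C_{b,e}(L, W) there exists a unique continuous function Φ̃ : (Γ(L), d_H) → W such that Φ = Φ̃ ∘ Γ. Moreover, the map I_L : Φ ↦ Φ̃ is a linear isometry from (C_{b,e}(L, W), ‖·‖_∞) onto its image, and this image is a closed linear subspace of the Banach space C_b(Γ(L), W) of bounded continuous W-valued functions on (Γ(L), d_H) with the sup-norm. -/

import Mathlib

open Filter Topology Set TopologicalSpace BoundedContinuousFunction

noncomputable section

/-- The two-point set `{x, -x}` as a nonempty compact subset of `V`. -/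
def pairNC {V : Type*} [NormedAddCommGroup V] (x : V) :
    TopologicalSpace.NonemptyCompacts V where
  carrier := {x, -x}
  isCompact' := (Set.toFinite ({x, -x} : Set V)).isCompact
  nonempty' := ⟨x, Or.inl rfl⟩

/-- `Γ(L) = {{x,-x} : x ∈ L}` inside the nonempty compact subsets of `V`, carrying the
Hausdorff distance, for which `d_H({x,-x}, {y,-y}) = min (‖x-y‖, ‖x+y‖)`. -/
def GammaSet {V : Type*} [NormedAddCommGroup V] (L : Set V) :
    Set (TopologicalSpace.NonemptyCompacts V) :=
  {K | ∃ x ∈ L, K = pairNC x}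

/-- The canonical surjection `Γ : L → Γ(L)`, `x ↦ {x, -x}`. -/
def gammaPt {V : Type*} [NormedAddCommGroup V] (L : Set V) (x : ↥L) : ↥(GammaSet L) :=
  ⟨pairNC (x : V), ⟨(x : V), x.2, rfl⟩⟩

/-- `C_{b,e}(L, W)`: the subspace of the bounded continuous functions `L → W` consisting of
the even ones, i.e. those with `Φ(-x) = Φ(x)` whenever `x, -x ∈ L`. -/
def evenSubspace (V : Type*) [NormedAddCommGroup V] (W : Type*) [NormedAddCommGroup W]
    [NormedSpace ℝ W] (L : Set V) :
    Submodule ℝ (BoundedContinuousFunction ↥L W) where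
  carrier := {Φ | ∀ (x : ↥L) (hx : -(x : V) ∈ L), Φ ⟨-(x : V), hx⟩ = Φ x}
  add_mem' := by
    intro f g hf hg x hx
    simp [hf x hx, hg x hx]
  zero_mem' := by intro x hx; simp
  smul_mem' := by
    intro c f hf x hx
    simp [hf x hx]

section aux

variable {V : Type*} [NormedAddCommGroup V]

lemma pairNC_coe (x : V) : (pairNC x : Set V) = {x, -x} := rfl

lemma pair_edist_ne_top (x y : V) :
    EMetric.hausdorffEdist (pairNC x : Set V) (pairNC y : Set V) ≠ ⊤ := by
  rw [pairNC_coe, pairNC_coe]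
  exact Metric.hausdorffEdist_ne_top_of_nonempty_of_bounded ⟨x, Or.inl rfl⟩ ⟨y, Or.inl rfl⟩
    ((Set.toFinite _).isBounded) ((Set.toFinite _).isBounded)

lemma dist_pairNC_le (x y : V) : dist (pairNC x) (pairNC y) ≤ dist x y := by
  rw [Metric.NonemptyCompacts.dist_eq]
  apply Metric.hausdorffDist_le_of_mem_dist dist_nonneg
  · rintro z (h | h)
    · exact ⟨y, Or.inl rfl, le_of_eq (by rw [h])⟩
    · exact ⟨-y, Or.inr rfl, le_of_eq (by rw [show z = -x from h, dist_neg_neg])⟩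
  · rintro z (h | h)
    · exact ⟨x, Or.inl rfl, le_of_eq (by rw [h, dist_comm])⟩
    · exact ⟨-x, Or.inr rfl, le_of_eq (by rw [show z = -y from h, dist_neg_neg, dist_comm])⟩

lemma gammaPt_lipschitz (L : Set V) : LipschitzWith 1 (gammaPt L) := by
  apply LipschitzWith.of_dist_le_mul
  intro x y
  simpa [Subtype.dist_eq, gammaPt] using dist_pairNC_le (x : V) (y : V)

lemma exists_close_of_dist_pairNC_lt {x y : V} {r : ℝ}
    (h : dist (pairNC x) (pairNC y) < r) : dist y x < r ∨ dist y (-x) < r := by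
  rw [Metric.NonemptyCompacts.dist_eq] at h
  have hy : y ∈ (pairNC y : Set V) := Or.inl rfl
  obtain ⟨z, hz, hd⟩ := Metric.exists_dist_lt_of_hausdorffDist_lt' hy h
    (pair_edist_ne_top x y)
  rw [pairNC_coe] at hz
  rcases hz with rfl | hz
  · exact Or.inl (by rwa [dist_comm])
  · rw [Set.mem_singleton_iff] at hz
    subst hz
    exact Or.inr (by rwa [dist_comm] at hd)

variable {W : Type*} [NormedAddCommGroup W] [NormedSpace ℝ W] {L : Set V}

/-- a section of gammaPt -/
def gSec (L : Set V) (K : ↥(GammaSet L)) : ↥L := ⟨K.2.choose, K.2.choose_spec.1⟩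

lemma gammaPt_gSec (K : ↥(GammaSet L)) : gammaPt L (gSec L K) = K :=
  Subtype.ext K.2.choose_spec.2.symm

lemma even_const_on_fiber {Φ : BoundedContinuousFunction ↥L W}
    (hΦ : Φ ∈ evenSubspace V W L) {x y : ↥L} (h : gammaPt L x = gammaPt L y) :
    Φ x = Φ y := by
  have hset : ({(x:V), -(x:V)} : Set V) = {(y:V), -(y:V)} := congrArg (fun K => ((K : ↥(GammaSet L)) : Set V)) h
  have hy : (y : V) ∈ ({(x:V), -(x:V)} : Set V) := hset ▸ (Or.inl rfl)
  rcases hy with hy | hy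
  · congr 1; exact Subtype.ext hy.symm
  · have hx : -(x : V) ∈ L := by rw [← hy] at *; exact y.2
    have := hΦ x hx
    rw [← this]
    congr 1
    exact Subtype.ext hy.symm

end aux

theorem statement5 {V W : Type*} [NormedAddCommGroup V] [NormedSpace ℝ V] [CompleteSpace V]
    [NormedAddCommGroup W] [NormedSpace ℝ W] [CompleteSpace W]
    (L : Set V) (hLne : L.Nonempty) (hLsym : ∀ x ∈ L, -x ∈ L) (hLclosed : IsClosed L) :
    (∀ Φ : evenSubspace V W L,
      ∃! Φt : ↥(GammaSet L) → W, Continuous Φt ∧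
        ∀ x : ↥L, Φt (gammaPt L x) = (Φ : BoundedContinuousFunction ↥L W) x) ∧
    ∃ I : ↥(evenSubspace V W L) →ₗᵢ[ℝ] BoundedContinuousFunction ↥(GammaSet L) W,
      (∀ (Φ : evenSubspace V W L) (x : ↥L),
        I Φ (gammaPt L x) = (Φ : BoundedContinuousFunction ↥L W) x) ∧
      IsClosed (Set.range fun Φ : evenSubspace V W L => I Φ) := by
  classical
  -- the lifted function
  set lift : (evenSubspace V W L) → (↥(GammaSet L) → W) :=
    fun Φ K => (Φ : BoundedContinuousFunction ↥L W) (gSec L K) with hlift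
  have hfact : ∀ (Φ : evenSubspace V W L) (x : ↥L),
      lift Φ (gammaPt L x) = (Φ : BoundedContinuousFunction ↥L W) x := by
    intro Φ x
    exact even_const_on_fiber Φ.2 (gammaPt_gSec (gammaPt L x))
  have hcont : ∀ Φ : evenSubspace V W L, Continuous (lift Φ) := by
    intro Φ
    rw [Metric.continuous_iff]
    intro K ε hε
    set Φ' := (Φ : BoundedContinuousFunction ↥L W)
    set x₀ : ↥L := gSec L K
    have hx₀' : -(x₀ : V) ∈ L := hLsym _ x₀.2
    -- continuity of Φ' at x₀ and -x₀
    have h1 := Metric.continuous_iff.1 Φ'.continuous x₀ ε hε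
    have h2 := Metric.continuous_iff.1 Φ'.continuous ⟨-(x₀:V), hx₀'⟩ ε hε
    obtain ⟨δ₁, hδ₁, H1⟩ := h1
    obtain ⟨δ₂, hδ₂, H2⟩ := h2
    refine ⟨min δ₁ δ₂, lt_min hδ₁ hδ₂, ?_⟩
    intro K' hK'
    set y : ↥L := gSec L K'
    have hKx : K = gammaPt L x₀ := (gammaPt_gSec K).symm
    have hKy : K' = gammaPt L y := (gammaPt_gSec K').symm
    have hd : dist (pairNC (x₀:V)) (pairNC (y:V)) < min δ₁ δ₂ := by
      rw [hKx, hKy, Subtype.dist_eq, dist_comm] at hK'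
      exact hK'
    have hlK : lift Φ K = Φ' x₀ := rfl
    have hlK' : lift Φ K' = Φ' y := rfl
    rw [hlK, hlK']
    rcases exists_close_of_dist_pairNC_lt hd with h | h
    · have : dist y x₀ < δ₁ := lt_of_lt_of_le h (by simpa using min_le_left δ₁ δ₂)
      · exact H1 y (by simpa [Subtype.dist_eq] using this)
    · have hyd : dist y (⟨-(x₀:V), hx₀'⟩ : ↥L) < δ₂ := by
        have : dist (y:V) (-(x₀:V)) < δ₂ := lt_of_lt_of_le h (min_le_right δ₁ δ₂)
        simpa [Subtype.dist_eq] using this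
      have := H2 y hyd
      rwa [Φ.2 x₀ hx₀'] at this
  have hbdd : ∀ Φ : evenSubspace V W L, ∀ K, ‖lift Φ K‖ ≤ ‖(Φ : BoundedContinuousFunction ↥L W)‖ :=
    fun Φ K => (Φ : BoundedContinuousFunction ↥L W).norm_coe_le_norm _
  -- build the BCF
  set Ifun : (evenSubspace V W L) → BoundedContinuousFunction ↥(GammaSet L) W :=
    fun Φ => BoundedContinuousFunction.ofNormedAddCommGroup (lift Φ) (hcont Φ) _ (hbdd Φ) with hIfun
  have hIapp : ∀ (Φ : evenSubspace V W L) K, Ifun Φ K = lift Φ K := fun _ _ => rfl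
  constructor
  · intro Φ
    refine ⟨lift Φ, ⟨hcont Φ, hfact Φ⟩, ?_⟩
    rintro g ⟨-, hg⟩
    funext K
    rw [← gammaPt_gSec K, hg, hfact]
  · set J : ↥(evenSubspace V W L) →ₗᵢ[ℝ] BoundedContinuousFunction ↥(GammaSet L) W :=
      { toFun := Ifun
        map_add' := by intro Φ Ψ; ext K; simp [hIapp, hlift]
        map_smul' := by intro c Φ; ext K; simp [hIapp, hlift]
        norm_map' := by
          intro Φ
          show ‖Ifun Φ‖ = ‖(Φ : BoundedContinuousFunction ↥L W)‖
          apply le_antisymm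
          · exact (BoundedContinuousFunction.norm_le (norm_nonneg _)).2 (hbdd Φ)
          · apply (BoundedContinuousFunction.norm_le (norm_nonneg _)).2
            intro x
            calc ‖(Φ : BoundedContinuousFunction ↥L W) x‖
                = ‖Ifun Φ (gammaPt L x)‖ := by rw [hIapp, hfact]
              _ ≤ ‖Ifun Φ‖ := (Ifun Φ).norm_coe_le_norm _ } with hJ
    refine ⟨J, fun Φ x => hfact Φ x, ?_⟩
    have hsurj : ∀ g : BoundedContinuousFunction ↥(GammaSet L) W,
        ∃ Φ : evenSubspace V W L, J Φ = g := by
      intro g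
      set γ : C(↥L, ↥(GammaSet L)) := ⟨gammaPt L, (gammaPt_lipschitz L).continuous⟩
      set Φ₀ : BoundedContinuousFunction ↥L W := g.compContinuous γ
      have hΦ₀ : Φ₀ ∈ evenSubspace V W L := by
        intro x hx
        show g (gammaPt L ⟨-(x:V), hx⟩) = g (gammaPt L x)
        congr 1
        apply Subtype.ext
        apply NonemptyCompacts.ext
        show ({-(x:V), -(-(x:V))} : Set V) = {(x:V), -(x:V)}
        rw [neg_neg]
        exact Set.pair_comm _ _
      refine ⟨⟨Φ₀, hΦ₀⟩, ?_⟩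
      ext K
      show Φ₀ (gSec L K) = g K
      show g (gammaPt L (gSec L K)) = g K
      rw [gammaPt_gSec]
    have hr : (Set.range fun Φ : evenSubspace V W L => J Φ) = Set.univ :=
      Set.range_eq_univ.2 hsurj
    rw [hr]
    exact isClosed_univ

end
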